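/- Let (π^t_*)_{t=1}^T be any sequence of Markov policies in a fixed MDP, and let (μ̄^t)_{t=1}^T be any sequence of feasible occupancy measures with induced policies π̄^t (so μ̄^t = μ^{π̄^t}). Then Σ_{t=1}^T Σ_{h=1}^H Σ_s μ̄^t_h(s) ‖π̄^t_h(·|s) − π^t_{*,h}(·|s)‖₁ ≤ sqrt( H·S·A·T · Σ_{t=1}^T ⟨R_{π^t_*}(μ̄^t), μ^{π^t_*} − μ̄^t⟩ ), where R_π is the steering reward R_π(μ) = −μᵀ(W^π−I)ᵀ(W^π−I). -/
import Mathlib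


open Finset

def IsPolicy {S A : Type*} [Fintype A] (π : ℕ → S → A → ℝ) : Prop :=
  ∀ h s, (∀ a, 0 ≤ π h s a) ∧ ∑ a, π h s a = 1

def IsKernel {S A : Type*} [Fintype S] (P : ℕ → S → A → S → ℝ) : Prop :=
  ∀ h s a, (∀ s', 0 ≤ P h s a s') ∧ ∑ s', P h s a s' = 1

def IsProb {S : Type*} [Fintype S] (μ₁ : S → ℝ) : Prop :=
  (∀ s, 0 ≤ μ₁ s) ∧ ∑ s, μ₁ s = 1

noncomputable def occ {S A : Type*} [Fintype S] [Fintype A] (μ₁ : S → ℝ)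
    (P : ℕ → S → A → S → ℝ) (π : ℕ → S → A → ℝ) : ℕ → S → A → ℝ
  | 0 => fun s a => μ₁ s * π 0 s a
  | (h+1) => fun s a => π (h+1) s a * ∑ s', ∑ a', P h s' a' s * occ μ₁ P π h s' a'


noncomputable def Rpi {S A : Type*} [Fintype A] [DecidableEq A]
    (π : ℕ → S → A → ℝ) (μ : ℕ → S → A → ℝ) (h : ℕ) (s : S) (a : A) : ℝ :=
  - ∑ a', (π h s a' * (∑ b, μ h s b) - μ h s a') * (π h s a' - if a' = a then 1 else 0)

noncomputable def pibar {S A : Type*} [Fintype A] (μ : ℕ → S → A → ℝ) :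
    ℕ → S → A → ℝ :=
  fun h s a => if (∑ b, μ h s b) = 0 then 1 / (Fintype.card A : ℝ) else μ h s a / (∑ b, μ h s b)

/- ### Auxiliary lemmas -/

lemma occ_nonneg {S A : Type*} [Fintype S] [Fintype A] (μ₁ : S → ℝ) (hμ₁ : IsProb μ₁)
    (P : ℕ → S → A → S → ℝ) (hP : IsKernel P) (π : ℕ → S → A → ℝ) (hπ : IsPolicy π) :
    ∀ h s a, 0 ≤ occ μ₁ P π h s a := by
  intro h
  induction h with
  | zero => intro s a; exact mul_nonneg (hμ₁.1 s) ((hπ 0 s).1 a)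
  | succ h ih =>
    intro s a
    refine mul_nonneg ((hπ (h+1) s).1 a) ?_
    refine Finset.sum_nonneg fun s' _ => Finset.sum_nonneg fun a' _ => ?_
    exact mul_nonneg ((hP h s' a').1 s) (ih s' a')

lemma occ_factor {S A : Type*} [Fintype S] [Fintype A] (μ₁ : S → ℝ)
    (P : ℕ → S → A → S → ℝ) (π : ℕ → S → A → ℝ) (hπ : IsPolicy π) (h : ℕ) (s : S) (a : A) :
    occ μ₁ P π h s a = π h s a * ∑ b, occ μ₁ P π h s b := by
  cases h with
  | zero =>
    show μ₁ s * π 0 s a = π 0 s a * ∑ b, μ₁ s * π 0 s b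
    rw [← Finset.mul_sum, (hπ 0 s).2, mul_one]
    ring
  | succ h =>
    show π (h+1) s a * _ = π (h+1) s a * ∑ b, π (h+1) s b * _
    rw [← Finset.sum_mul, (hπ (h+1) s).2, one_mul]

lemma pibar_factor {S A : Type*} [Fintype A] (μ : ℕ → S → A → ℝ) (h : ℕ) (s : S)
    (hμ : ∀ a, 0 ≤ μ h s a) (a : A) :
    μ h s a = pibar μ h s a * ∑ b, μ h s b := by
  unfold pibar
  by_cases h0 : (∑ b, μ h s b) = 0
  · rw [if_pos h0, h0, mul_zero]
    exact (Finset.sum_eq_zero_iff_of_nonneg fun b _ => hμ b).1 h0 a (Finset.mem_univ a)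
  · rw [if_neg h0, div_mul_cancel₀ _ h0]

lemma sum_expand {A : Type*} [Fintype A] (p q : A → ℝ) (m n K : ℝ) :
    ∑ a, ((p a - q a) * m - K) * (p a * n - q a * m)
    = (∑ a, (p a - q a) * p a) * (m * n) - (∑ a, (p a - q a) * q a) * (m * m)
      - (∑ a, p a) * (K * n) + (∑ a, q a) * (K * m) := by
  rw [Finset.sum_mul, Finset.sum_mul, Finset.sum_mul, Finset.sum_mul,
      ← Finset.sum_sub_distrib, ← Finset.sum_sub_distrib, ← Finset.sum_add_distrib]
  exact Finset.sum_congr rfl fun a _ => by ring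

lemma key_id {A : Type*} [Fintype A] [DecidableEq A] (p q μf νf : A → ℝ)
    (hμ : ∀ a, μf a = q a * ∑ b, μf b) (hν : ∀ a, νf a = p a * ∑ b, νf b)
    (hp : ∑ a, p a = 1) :
    ∑ a, (-∑ a', (p a' * (∑ b, μf b) - μf a') * (p a' - if a' = a then (1:ℝ) else 0)) *
        (νf a - μf a)
      = (∑ b, μf b) ^ 2 * ∑ a, (q a - p a) ^ 2 := by
  set m := ∑ b, μf b with hm
  set n := ∑ b, νf b with hn
  have hq : (∑ b, q b) * m = m := by
    rw [Finset.sum_mul]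
    conv_rhs => rw [hm]
    exact Finset.sum_congr rfl fun b _ => (hμ b).symm
  simp only [hμ, hν]
  have inner : ∀ a : A, (∑ a', (p a' * m - q a' * m) * (p a' - if a' = a then (1:ℝ) else 0))
      = (∑ a', (p a' - q a') * m * p a') - (p a - q a) * m := by
    intro a
    have e : ∀ a' : A, (p a' * m - q a' * m) * (p a' - if a' = a then (1:ℝ) else 0)
        = (p a' - q a') * m * p a' - (if a' = a then (p a' - q a') * m else 0) := by
      intro a'
      by_cases hh : a' = a
      · rw [if_pos hh, if_pos hh]; ring
      · rw [if_neg hh, if_neg hh]; ring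
    rw [Finset.sum_congr rfl fun a' _ => e a', Finset.sum_sub_distrib,
        Finset.sum_ite_eq' Finset.univ a (fun a' => (p a' - q a') * m)]
    simp
  rw [Finset.sum_congr rfl fun a _ => by rw [inner a, neg_sub]]
  rw [sum_expand, hp]
  have hK : (∑ a, (p a - q a) * m * p a) = m * ∑ a, (p a - q a) * p a := by
    rw [Finset.mul_sum]
    exact Finset.sum_congr rfl fun a _ => by ring
  rw [hK]
  have hdiff : ∑ a, (q a - p a) ^ 2
      = (∑ a, (p a - q a) * p a) - ∑ a, (p a - q a) * q a := by
    rw [← Finset.sum_sub_distrib]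
    exact Finset.sum_congr rfl fun a _ => by ring
  rw [hdiff]
  linear_combination (m * (∑ a, (p a - q a) * p a)) * hq

lemma sq_sum3 (T H : ℕ) {S : Type*} [Fintype S] (f : ℕ → ℕ → S → ℝ) :
    (∑ t ∈ Finset.range T, ∑ h ∈ Finset.range H, ∑ s, f t h s) ^ 2
      ≤ (T : ℝ) * (H : ℝ) * (Fintype.card S : ℝ) *
        ∑ t ∈ Finset.range T, ∑ h ∈ Finset.range H, ∑ s, (f t h s) ^ 2 := by
  calc (∑ t ∈ Finset.range T, ∑ h ∈ Finset.range H, ∑ s, f t h s) ^ 2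
      ≤ (T:ℝ) * ∑ t ∈ Finset.range T, (∑ h ∈ Finset.range H, ∑ s, f t h s)^2 := by
        simpa using sq_sum_le_card_mul_sum_sq (s := Finset.range T)
          (f := fun t => ∑ h ∈ Finset.range H, ∑ s, f t h s)
    _ ≤ (T:ℝ) * ∑ t ∈ Finset.range T, ((H:ℝ) * ∑ h ∈ Finset.range H, (∑ s, f t h s)^2) := by
        refine mul_le_mul_of_nonneg_left ?_ (Nat.cast_nonneg T)
        refine Finset.sum_le_sum fun t _ => ?_
        simpa using sq_sum_le_card_mul_sum_sq (s := Finset.range H)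
          (f := fun h => ∑ s, f t h s)
    _ ≤ (T:ℝ) * ∑ t ∈ Finset.range T, ((H:ℝ) * ∑ h ∈ Finset.range H,
          ((Fintype.card S : ℝ) * ∑ s, (f t h s)^2)) := by
        refine mul_le_mul_of_nonneg_left ?_ (Nat.cast_nonneg T)
        refine Finset.sum_le_sum fun t _ => ?_
        refine mul_le_mul_of_nonneg_left ?_ (Nat.cast_nonneg H)
        refine Finset.sum_le_sum fun h _ => ?_
        simpa using sq_sum_le_card_mul_sum_sq (s := (Finset.univ : Finset S))
          (f := fun s => f t h s)
    _ = (T:ℝ) * (H:ℝ) * (Fintype.card S:ℝ) *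
          ∑ t ∈ Finset.range T, ∑ h ∈ Finset.range H, ∑ s, (f t h s)^2 := by
        simp_rw [← Finset.mul_sum]
        ring

/-- for any sequence of target policies `π^t_*` and any sequence of feasible
occupancy measures `μ̄^t` (with induced policies `π̄^t`),
`Σ_t Σ_h Σ_s μ̄^t_h(s)‖π̄^t_h(·|s) − π^t_{*,h}(·|s)‖₁ ≤
  sqrt(HSAT · Σ_t ⟨R_{π^t_*}(μ̄^t), μ^{π^t_*} − μ̄^t⟩)`. -/
theorem stmt6 {S A : Type*} [Fintype S] [Fintype A] [DecidableEq A]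
    (H T : ℕ) (μ₁ : S → ℝ) (hμ₁ : IsProb μ₁)
    (P : ℕ → S → A → S → ℝ) (hP : IsKernel P)
    (πst : ℕ → ℕ → S → A → ℝ) (hπst : ∀ t, IsPolicy (πst t))
    (ρ : ℕ → ℕ → S → A → ℝ) (hρ : ∀ t, IsPolicy (ρ t))
    (μb : ℕ → ℕ → S → A → ℝ) (hμb : ∀ t, μb t = occ μ₁ P (ρ t)) :
    ∑ t ∈ Finset.range T, ∑ h ∈ Finset.range H, ∑ s,
        (∑ a, μb t h s a) * (∑ a, |pibar (μb t) h s a - πst t h s a|) ≤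
      Real.sqrt ((H * Fintype.card S * Fintype.card A * T : ℝ) *
        ∑ t ∈ Finset.range T, ∑ h ∈ Finset.range H, ∑ s, ∑ a,
          Rpi (πst t) (μb t) h s a * (occ μ₁ P (πst t) h s a - μb t h s a)) := by
  have hμbnn : ∀ t h s a, 0 ≤ μb t h s a := by
    intro t h s a
    rw [hμb t]
    exact occ_nonneg μ₁ hμ₁ P hP (ρ t) (hρ t) h s a
  have hpoint : ∀ t h s,
      ∑ a, Rpi (πst t) (μb t) h s a * (occ μ₁ P (πst t) h s a - μb t h s a)
        = (∑ b, μb t h s b) ^ 2 * ∑ a, (pibar (μb t) h s a - πst t h s a) ^ 2 := by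
    intro t h s
    have := key_id (fun a => πst t h s a) (fun a => pibar (μb t) h s a)
        (fun a => μb t h s a) (fun a => occ μ₁ P (πst t) h s a)
        (fun a => pibar_factor (μb t) h s (fun b => hμbnn t h s b) a)
        (fun a => occ_factor μ₁ P (πst t) (hπst t) h s a)
        ((hπst t) h s).2
    simpa [Rpi] using this
  have hRHS : (∑ t ∈ Finset.range T, ∑ h ∈ Finset.range H, ∑ s, ∑ a,
        Rpi (πst t) (μb t) h s a * (occ μ₁ P (πst t) h s a - μb t h s a))
      = ∑ t ∈ Finset.range T, ∑ h ∈ Finset.range H, ∑ s,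
          (∑ b, μb t h s b) ^ 2 * ∑ a, (pibar (μb t) h s a - πst t h s a) ^ 2 :=
    Finset.sum_congr rfl fun t _ => Finset.sum_congr rfl fun h _ =>
      Finset.sum_congr rfl fun s _ => hpoint t h s
  rw [hRHS]
  have hGnn : (0:ℝ) ≤ ∑ t ∈ Finset.range T, ∑ h ∈ Finset.range H, ∑ s,
      (∑ b, μb t h s b) ^ 2 * ∑ a, (pibar (μb t) h s a - πst t h s a) ^ 2 := by
    refine Finset.sum_nonneg fun t _ => Finset.sum_nonneg fun h _ =>
      Finset.sum_nonneg fun s _ => ?_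
    exact mul_nonneg (sq_nonneg _) (Finset.sum_nonneg fun a _ => sq_nonneg _)
  have hLnn : (0:ℝ) ≤ ∑ t ∈ Finset.range T, ∑ h ∈ Finset.range H, ∑ s,
      (∑ a, μb t h s a) * (∑ a, |pibar (μb t) h s a - πst t h s a|) := by
    refine Finset.sum_nonneg fun t _ => Finset.sum_nonneg fun h _ =>
      Finset.sum_nonneg fun s _ => ?_
    exact mul_nonneg (Finset.sum_nonneg fun a _ => hμbnn t h s a)
      (Finset.sum_nonneg fun a _ => abs_nonneg _)
  rw [Real.le_sqrt hLnn (by positivity)]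
  calc (∑ t ∈ Finset.range T, ∑ h ∈ Finset.range H, ∑ s,
        (∑ a, μb t h s a) * (∑ a, |pibar (μb t) h s a - πst t h s a|)) ^ 2
      ≤ (T : ℝ) * (H : ℝ) * (Fintype.card S : ℝ) *
          ∑ t ∈ Finset.range T, ∑ h ∈ Finset.range H, ∑ s,
            ((∑ a, μb t h s a) * (∑ a, |pibar (μb t) h s a - πst t h s a|)) ^ 2 :=
        sq_sum3 T H _
    _ ≤ (T : ℝ) * (H : ℝ) * (Fintype.card S : ℝ) *
          ∑ t ∈ Finset.range T, ∑ h ∈ Finset.range H, ∑ s,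
            ((Fintype.card A : ℝ) *
              ((∑ b, μb t h s b) ^ 2 * ∑ a, (pibar (μb t) h s a - πst t h s a) ^ 2)) := by
        refine mul_le_mul_of_nonneg_left ?_ (by positivity)
        refine Finset.sum_le_sum fun t _ => Finset.sum_le_sum fun h _ =>
          Finset.sum_le_sum fun s _ => ?_
        have h1 : (∑ a, |pibar (μb t) h s a - πst t h s a|) ^ 2
            ≤ (Fintype.card A : ℝ) * ∑ a, (pibar (μb t) h s a - πst t h s a) ^ 2 := by
          have := sq_sum_le_card_mul_sum_sq (s := (Finset.univ : Finset A))
            (f := fun a => |pibar (μb t) h s a - πst t h s a|)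
          simpa [sq_abs] using this
        calc ((∑ a, μb t h s a) * (∑ a, |pibar (μb t) h s a - πst t h s a|)) ^ 2
            = (∑ a, μb t h s a) ^ 2 * (∑ a, |pibar (μb t) h s a - πst t h s a|) ^ 2 := by
              ring
          _ ≤ (∑ a, μb t h s a) ^ 2 *
                ((Fintype.card A : ℝ) * ∑ a, (pibar (μb t) h s a - πst t h s a) ^ 2) :=
              mul_le_mul_of_nonneg_left h1 (sq_nonneg _)
          _ = (Fintype.card A : ℝ) *
                ((∑ b, μb t h s b) ^ 2 * ∑ a, (pibar (μb t) h s a - πst t h s a) ^ 2) := by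
              ring
    _ = (H * Fintype.card S * Fintype.card A * T : ℝ) *
          ∑ t ∈ Finset.range T, ∑ h ∈ Finset.range H, ∑ s,
            (∑ b, μb t h s b) ^ 2 * ∑ a, (pibar (μb t) h s a - πst t h s a) ^ 2 := by
        simp_rw [← Finset.mul_sum]
        ring
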